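/- Let G be a finite group of unitaries on a Hilbert space K such that every element of G is of the form λ(2P − I) with λ ∈ {±1, ±i} and P an orthogonal projection, and let A = G′ be the commutant. Then for any T ∈ B(K), ‖T − Φ(T)‖ ≤ 2 · sup_{P ∈ LatA} ‖P^⊥ T P‖, where Φ(T) = |G|⁻¹ Σ_{G∈G} G T G* is the averaging expectation onto A, provided each projection P arising from G ∈ G lies in Lat A. -/

import Mathlib

variable {K : Type*} [NormedAddCommGroup K] [InnerProductSpace ℂ K] [CompleteSpace K]

/-- The commutant `G′` of a group of unitaries on `K`. -/
def commutant (G : Subgroup (unitary (K →L[ℂ] K))) : Set (K →L[ℂ] K) :=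
  {T | ∀ g : G, T * ((g : unitary (K →L[ℂ] K)) : K →L[ℂ] K) =
      ((g : unitary (K →L[ℂ] K)) : K →L[ℂ] K) * T}

/-- `Lat G′`: the orthogonal projections `P` with `P^⊥ A P = 0` for all `A ∈ G′`. -/
def latProj (G : Subgroup (unitary (K →L[ℂ] K))) : Set (K →L[ℂ] K) :=
  {P | IsSelfAdjoint P ∧ IsIdempotentElem P ∧
    ∀ T ∈ commutant G, (1 - P) * T * P = 0}

lemma commutant_star {G : Subgroup (unitary (K →L[ℂ] K))} {A : K →L[ℂ] K}
    (hA : A ∈ commutant G) : star A ∈ commutant G := by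
  intro g
  have h := hA g⁻¹
  have hcoe : ((↑(g⁻¹) : unitary (K →L[ℂ] K)) : K →L[ℂ] K) =
      star ((↑g : unitary (K →L[ℂ] K)) : K →L[ℂ] K) := by
    rw [← Unitary.coe_star]
    congr 1
  rw [hcoe] at h
  calc star A * ((g : unitary (K →L[ℂ] K)) : K →L[ℂ] K)
      = star (star ((g : unitary (K →L[ℂ] K)) : K →L[ℂ] K) * A) := by
        rw [star_mul, star_star]
    _ = star (A * star ((g : unitary (K →L[ℂ] K)) : K →L[ℂ] K)) := by rw [h]
    _ = ((g : unitary (K →L[ℂ] K)) : K →L[ℂ] K) * star A := by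
        rw [star_mul, star_star]

lemma latProj_compl {G : Subgroup (unitary (K →L[ℂ] K))} {P : K →L[ℂ] K}
    (hP : P ∈ latProj G) : 1 - P ∈ latProj G := by
  obtain ⟨hsa, hid, hlat⟩ := hP
  refine ⟨(IsSelfAdjoint.one (K →L[ℂ] K)).sub hsa, hid.one_sub, fun T hT => ?_⟩
  have h := hlat (star T) (commutant_star hT)
  have := congrArg star h
  rw [star_zero, star_mul, star_mul, star_star, hsa.star_eq,
    ((IsSelfAdjoint.one (K →L[ℂ] K)).sub hsa).star_eq] at this
  rw [sub_sub_cancel]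
  rw [← mul_assoc] at this
  exact this

lemma norm_proj_le_one {P : K →L[ℂ] K} (hsa : IsSelfAdjoint P)
    (hid : IsIdempotentElem P) : ‖P‖ ≤ 1 := by
  have h : ‖P‖ * ‖P‖ = ‖P‖ := by
    rw [← CStarRing.norm_star_mul_self, hsa.star_eq, hid.eq]
  nlinarith [norm_nonneg P]

lemma key_comm_bound (P T : K →L[ℂ] K) (hsa : IsSelfAdjoint P)
    (hid : IsIdempotentElem P) {S : ℝ} (hS : 0 ≤ S)
    (hA : ‖(1 - P) * T * P‖ ≤ S) (hB : ‖P * T * (1 - P)‖ ≤ S) :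
    ‖T * P - P * T‖ ≤ S := by
  have hsa' : IsSelfAdjoint (1 - P) := (IsSelfAdjoint.one (K →L[ℂ] K)).sub hsa
  have heq : T * P - P * T = (1 - P) * T * P - P * T * (1 - P) := by
    noncomm_ring
  rw [heq]
  set A := (1 - P) * T * P with hAdef
  set B := P * T * (1 - P) with hBdef
  refine ContinuousLinearMap.opNorm_le_bound _ hS fun x => ?_
  have hAP : A * P = A := by rw [hAdef, mul_assoc, mul_assoc, hid.eq, ← mul_assoc]
  have hBP : B * (1 - P) = B := by
    rw [hBdef, mul_assoc, mul_assoc, hid.one_sub.eq, ← mul_assoc]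
  have hadj' : ContinuousLinearMap.adjoint (1 - P) = 1 - P := by
    rw [← ContinuousLinearMap.star_eq_adjoint, hsa'.star_eq]
  have hzPP : (1 - P) * P = 0 := by
    rw [sub_mul, one_mul, hid.eq, sub_self]
  have hzPP' : P * (1 - P) = 0 := by
    rw [mul_sub, mul_one, hid.eq, sub_self]
  -- orthogonality of A x and B x
  have horth : inner ℂ (A x) (B x) = (0 : ℂ) := by
    have h1 : A x = (1 - P) ((T * P) x) := by rw [hAdef, mul_assoc]; rfl
    have h2 : B x = P ((T * (1 - P)) x) := by rw [hBdef, mul_assoc]; rfl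
    have h3 : inner ℂ ((ContinuousLinearMap.adjoint (1 - P)) ((T * P) x))
        (P ((T * (1 - P)) x)) =
        (inner ℂ ((T * P) x) ((1 - P) (P ((T * (1 - P)) x))) : ℂ) :=
      ContinuousLinearMap.adjoint_inner_left _ _ _
    rw [hadj'] at h3
    have h4 : (1 - P) (P ((T * (1 - P)) x)) = ((1 - P) * P) ((T * (1 - P)) x) := rfl
    rw [h4, hzPP] at h3
    rw [h1, h2, h3]
    simp
  have horthx : inner ℂ (P x) ((1 - P) x) = (0 : ℂ) := by
    have hadj : ContinuousLinearMap.adjoint P = P := by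
      rw [← ContinuousLinearMap.star_eq_adjoint, hsa.star_eq]
    have h3 : inner ℂ ((ContinuousLinearMap.adjoint P) x) ((1 - P) x) =
        (inner ℂ x (P ((1 - P) x)) : ℂ) := ContinuousLinearMap.adjoint_inner_left _ _ _
    rw [hadj] at h3
    have h4 : P ((1 - P) x) = (P * (1 - P)) x := rfl
    rw [h4, hzPP'] at h3
    rw [h3]
    simp
  -- Pythagoras for x
  have hx : ‖x‖ ^ 2 = ‖P x‖ ^ 2 + ‖(1 - P) x‖ ^ 2 := by
    have hsum : P x + (1 - P) x = x := by
      have h : (P + (1 - P)) x = x := by rw [add_sub_cancel]; rfl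
      simpa using h
    have h := @norm_add_sq ℂ _ _ _ _ (P x) ((1 - P) x)
    rw [horthx, hsum] at h
    simpa using h
  have hsub : ‖A x - B x‖ ^ 2 = ‖A x‖ ^ 2 + ‖B x‖ ^ 2 := by
    have h := @norm_sub_sq ℂ _ _ _ _ (A x) (B x)
    rw [horth] at h
    simpa using h
  have hAx : ‖A x‖ ≤ S * ‖P x‖ := by
    calc ‖A x‖ = ‖A (P x)‖ := by rw [← ContinuousLinearMap.mul_apply, hAP]
      _ ≤ ‖A‖ * ‖P x‖ := A.le_opNorm _
      _ ≤ S * ‖P x‖ := by gcongr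
  have hBx : ‖B x‖ ≤ S * ‖(1 - P) x‖ := by
    calc ‖B x‖ = ‖B ((1 - P) x)‖ := by rw [← ContinuousLinearMap.mul_apply, hBP]
      _ ≤ ‖B‖ * ‖(1 - P) x‖ := B.le_opNorm _
      _ ≤ S * ‖(1 - P) x‖ := by gcongr
  have hA2 : ‖A x‖ ^ 2 ≤ (S * ‖P x‖) ^ 2 := pow_le_pow_left₀ (norm_nonneg _) hAx 2
  have hB2 : ‖B x‖ ^ 2 ≤ (S * ‖(1 - P) x‖) ^ 2 := pow_le_pow_left₀ (norm_nonneg _) hBx 2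
  have hfin : ‖(A - B) x‖ ^ 2 ≤ (S * ‖x‖) ^ 2 := by
    have h : (A - B) x = A x - B x := rfl
    rw [h, hsub]
    have hx2 : (S * ‖x‖) ^ 2 = (S * ‖P x‖) ^ 2 + (S * ‖(1 - P) x‖) ^ 2 := by
      rw [mul_pow, mul_pow, mul_pow, hx]; ring
    linarith [hA2, hB2]
  exact le_of_pow_le_pow_left₀ two_ne_zero (by positivity) hfin

/-- If every element of a finite group `G` of unitaries has the form
`λ(2P − I)` with `λ ∈ {±1, ±i}` and `P` a projection lying in `Lat G′`, then
for every `T`, `‖T − Φ(T)‖ ≤ 2 sup_{P ∈ Lat G′} ‖P^⊥ T P‖`, where `Φ` is the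
averaging expectation onto the commutant. -/
theorem norm_sub_average_le (G : Subgroup (unitary (K →L[ℂ] K))) [Fintype G]
    (hG : ∀ g : G, ∃ (lam : ℂ) (P : K →L[ℂ] K),
      (lam = 1 ∨ lam = -1 ∨ lam = Complex.I ∨ lam = -Complex.I) ∧
      IsSelfAdjoint P ∧ IsIdempotentElem P ∧
      ((g : unitary (K →L[ℂ] K)) : K →L[ℂ] K) = lam • (2 • P - 1) ∧
      P ∈ latProj G) :
    ∀ T : K →L[ℂ] K,
      ‖T - (Fintype.card G : ℂ)⁻¹ •
          ∑ g : G, ((g : unitary (K →L[ℂ] K)) : K →L[ℂ] K) * T *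
            star ((g : unitary (K →L[ℂ] K)) : K →L[ℂ] K)‖ ≤
        2 * ⨆ P : latProj G, ‖(1 - (P : K →L[ℂ] K)) * T * (P : K →L[ℂ] K)‖ := by
  intro T
  set S := ⨆ P : latProj G, ‖(1 - (P : K →L[ℂ] K)) * T * (P : K →L[ℂ] K)‖ with hSdef
  have hbdd : BddAbove (Set.range fun P : latProj G =>
      ‖(1 - (P : K →L[ℂ] K)) * T * (P : K →L[ℂ] K)‖) := by
    refine ⟨‖T‖, ?_⟩
    rintro _ ⟨⟨P, hP⟩, rfl⟩
    obtain ⟨hsa, hid, -⟩ := hP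
    have h1 : ‖(1 : K →L[ℂ] K) - P‖ ≤ 1 :=
      norm_proj_le_one ((IsSelfAdjoint.one (K →L[ℂ] K)).sub hsa) hid.one_sub
    have h2 : ‖P‖ ≤ 1 := norm_proj_le_one hsa hid
    calc ‖((1 : K →L[ℂ] K) - P) * T * P‖ ≤ ‖(1 : K →L[ℂ] K) - P‖ * ‖T‖ * ‖P‖ :=
          le_trans (norm_mul_le _ _) (by gcongr; exact norm_mul_le _ _)
      _ ≤ 1 * ‖T‖ * 1 := by gcongr
      _ = ‖T‖ := by ring
  have hle : ∀ P : latProj G, ‖(1 - (P : K →L[ℂ] K)) * T * (P : K →L[ℂ] K)‖ ≤ S :=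
    fun P => le_ciSup hbdd P
  have hS0 : 0 ≤ S := by
    have h0 : (0 : K →L[ℂ] K) ∈ latProj G :=
      ⟨by simp [IsSelfAdjoint], by simp [IsIdempotentElem], fun A _ => by simp⟩
    exact le_trans (norm_nonneg _) (hle ⟨0, h0⟩)
  -- per-element bound
  have hg : ∀ g : G, ‖T - ((g : unitary (K →L[ℂ] K)) : K →L[ℂ] K) * T *
      star ((g : unitary (K →L[ℂ] K)) : K →L[ℂ] K)‖ ≤ 2 * S := by
    intro g
    obtain ⟨lam, P, hlam, hsa, hid, hgeq, hPlat⟩ := hG g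
    set u := ((g : unitary (K →L[ℂ] K)) : K →L[ℂ] K) with hudef
    have hu1 : u * star u = 1 := Unitary.coe_mul_star_self (g : unitary (K →L[ℂ] K))
    have hnu : ‖star u‖ ≤ 1 := by
      have h : ‖star u‖ * ‖star u‖ ≤ 1 := by
        rw [← CStarRing.norm_star_mul_self, star_star, hu1]
        exact ContinuousLinearMap.norm_id_le
      nlinarith [norm_nonneg (star u)]
    have h1 : T - u * T * star u = (T * u - u * T) * star u := by
      rw [sub_mul, mul_assoc T u (star u), hu1, mul_one]
    have hcomm : T * u - u * T = lam • ((T * P - P * T) + (T * P - P * T)) := by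
      rw [hgeq, mul_smul_comm, smul_mul_assoc, ← smul_sub, two_smul]
      congr 1
      noncomm_ring
    have hlam1 : ‖lam‖ = 1 := by
      rcases hlam with h | h | h | h <;> simp [h]
    have hTP : ‖T * P - P * T‖ ≤ S := by
      refine key_comm_bound P T hsa hid hS0 (hle ⟨P, hPlat⟩) ?_
      have h := hle ⟨1 - P, latProj_compl hPlat⟩
      simpa [sub_sub_cancel] using h
    calc ‖T - u * T * star u‖ = ‖(T * u - u * T) * star u‖ := by rw [h1]
      _ ≤ ‖T * u - u * T‖ * ‖star u‖ := norm_mul_le _ _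
      _ ≤ ‖T * u - u * T‖ * 1 := by gcongr
      _ = ‖T * u - u * T‖ := mul_one _
      _ = ‖lam‖ * ‖(T * P - P * T) + (T * P - P * T)‖ := by rw [hcomm, norm_smul]
      _ ≤ 1 * (‖T * P - P * T‖ + ‖T * P - P * T‖) := by
          rw [hlam1]; gcongr; exact norm_add_le _ _
      _ ≤ 1 * (S + S) := by gcongr
      _ = 2 * S := by ring
  -- assemble
  set n := Fintype.card G with hn
  have hnpos : 0 < n := Fintype.card_pos
  have hsum : T - (n : ℂ)⁻¹ • ∑ g : G, ((g : unitary (K →L[ℂ] K)) : K →L[ℂ] K) * T *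
      star ((g : unitary (K →L[ℂ] K)) : K →L[ℂ] K)
      = (n : ℂ)⁻¹ • ∑ g : G, (T - ((g : unitary (K →L[ℂ] K)) : K →L[ℂ] K) * T *
      star ((g : unitary (K →L[ℂ] K)) : K →L[ℂ] K)) := by
    rw [Finset.sum_sub_distrib, smul_sub, Finset.sum_const, Finset.card_univ]
    congr 1
    rw [← Nat.cast_smul_eq_nsmul ℂ, ← hn, smul_smul, inv_mul_cancel₀, one_smul]
    exact_mod_cast Nat.cast_ne_zero.mpr hnpos.ne'
  rw [hsum, norm_smul]
  have hnorminv : ‖((n : ℂ))⁻¹‖ = (n : ℝ)⁻¹ := by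
    rw [norm_inv]; norm_num
  rw [hnorminv]
  calc (n : ℝ)⁻¹ * ‖∑ g : G, (T - ((g : unitary (K →L[ℂ] K)) : K →L[ℂ] K) * T *
      star ((g : unitary (K →L[ℂ] K)) : K →L[ℂ] K))‖
      ≤ (n : ℝ)⁻¹ * ∑ g : G, ‖T - ((g : unitary (K →L[ℂ] K)) : K →L[ℂ] K) * T *
        star ((g : unitary (K →L[ℂ] K)) : K →L[ℂ] K)‖ := by
        gcongr
        exact norm_sum_le _ _
    _ ≤ (n : ℝ)⁻¹ * ∑ _g : G, 2 * S := by
        gcongr with g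
        exact hg g
    _ = (n : ℝ)⁻¹ * (n * (2 * S)) := by
        rw [Finset.sum_const, Finset.card_univ, nsmul_eq_mul, ← hn]
    _ = 2 * S := by
        field_simp
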